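/- arXiv:2305.04963 — 2 statements merged into one kernel-verified Lean document; each statement's English description precedes it below -/
import Mathlib

section
/- Every automorphism of the CFI basic block χ_k that fixes each color class setwise and fixes each pair {a_i, b_i} setwise is determined by a subset S ⊆ {1,...,k} of even cardinality: it swaps a_i and b_i exactly for i ∈ S; conversely, every even-cardinality subset S determines such an automorphism. Hence χ_k has exactly 2^(k-1) such automorphisms. -/
/-- Hamming weight of a k-bit string. -/
def bitWeight {k : ℕ} (b : Fin k → Bool) : ℕ :=
  (Finset.univ.filter (fun i => b i = true)).card

/-- Vertices of the CFI basic block χ_k: one vertex for each k-bit string of even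
weight, plus the bit vertices a_i = (i, false) and b_i = (i, true). -/
def CFIVert (k : ℕ) : Type :=
  {b : Fin k → Bool // Even (bitWeight b)} ⊕ (Fin k × Bool)

/-- Adjacency of χ_k: string vertex x_b is adjacent to a_i if bit i of b is 0
and to b_i if bit i of b is 1. -/
def cfiAdj {k : ℕ} : CFIVert k → CFIVert k → Prop
  | Sum.inl b, Sum.inr p => b.1 p.1 = p.2
  | Sum.inr p, Sum.inl b => b.1 p.1 = p.2
  | _, _ => False

/-- Colors of χ_k: all string vertices share one color; the pair {a_i, b_i} has color i. -/
def cfiColor {k : ℕ} : CFIVert k → Option (Fin k)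
  | Sum.inl _ => none
  | Sum.inr p => some p.1

/-- An automorphism of χ_k fixing each color class setwise (hence each pair {a_i,b_i}
setwise): a permutation preserving adjacency and colors. -/
def IsCFIAut {k : ℕ} (π : Equiv.Perm (CFIVert k)) : Prop :=
  (∀ x y, cfiAdj (π x) (π y) ↔ cfiAdj x y) ∧ ∀ x, cfiColor (π x) = cfiColor x

-- helpers
def flipB {k : ℕ} (S : Finset (Fin k)) (b : Fin k → Bool) : Fin k → Bool :=
  fun i => xor (b i) (decide (i ∈ S))

lemma bw_cast {k : ℕ} (b : Fin k → Bool) :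
    ((bitWeight b : ℕ) : ZMod 2) = ∑ i, (if b i = true then 1 else 0) := by
  rw [bitWeight, Finset.card_filter]
  push_cast
  rfl

lemma bw_flip {k : ℕ} (S : Finset (Fin k)) (b : Fin k → Bool) :
    ((bitWeight (flipB S b) : ℕ) : ZMod 2) = (bitWeight b : ℕ) + (S.card : ℕ) := by
  have hS : (S.card : ZMod 2) = ((bitWeight (fun i => decide (i ∈ S)) : ℕ) : ZMod 2) := by
    congr 1
    rw [bitWeight]
    congr 1
    ext i
    simp
  rw [hS, bw_cast, bw_cast, bw_cast, ← Finset.sum_add_distrib]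
  apply Finset.sum_congr rfl
  intro i _
  rcases hb : b i with _ | _ <;> rcases hs : decide (i ∈ S) with _ | _ <;>
    simp [flipB, hb, hs] <;> decide

lemma even_iff_zmod (n : ℕ) : Even n ↔ (n : ZMod 2) = 0 := by
  rw [even_iff_two_dvd, ZMod.natCast_eq_zero_iff]

instance {k : ℕ} : DecidableEq (CFIVert k) := by unfold CFIVert; infer_instance

lemma flip_parity {k : ℕ} (S : Finset (Fin k)) (hS : Even S.card) {b : Fin k → Bool}
    (hb : Even (bitWeight b)) : Even (bitWeight (flipB S b)) := by
  rw [even_iff_zmod] at *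
  rw [bw_flip, hb, hS, add_zero]

def flipV {k : ℕ} (S : Finset (Fin k)) (hS : Even S.card) : CFIVert k → CFIVert k
  | Sum.inl b => Sum.inl ⟨flipB S b.1, flip_parity S hS b.2⟩
  | Sum.inr p => Sum.inr (p.1, xor p.2 (decide (p.1 ∈ S)))

lemma flipV_invol {k : ℕ} (S : Finset (Fin k)) (hS : Even S.card) :
    Function.Involutive (flipV S hS) := by
  rintro (b | ⟨i, t⟩)
  · simp only [flipV]
    congr 1
    apply Subtype.ext
    funext i
    simp [flipB, Bool.xor_assoc]
  · simp [flipV, Bool.xor_assoc] <;> rfl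

def flipPerm {k : ℕ} (S : Finset (Fin k)) (hS : Even S.card) : Equiv.Perm (CFIVert k) :=
  (flipV_invol S hS).toPerm

lemma flipPerm_isAut {k : ℕ} (S : Finset (Fin k)) (hS : Even S.card) :
    IsCFIAut (flipPerm S hS) := by
  constructor
  · rintro (b | ⟨i, t⟩) (c | ⟨j, s⟩) <;>
      simp only [flipPerm, Function.Involutive.coe_toPerm, flipV, cfiAdj, flipB]
    · rcases hb : b.1 j with _ | _ <;> rcases hd : decide (j ∈ S) with _ | _ <;>
        simp [hb, hd]
    · rcases hb : c.1 i with _ | _ <;> rcases hd : decide (i ∈ S) with _ | _ <;>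
        simp [hb, hd]
  · rintro (b | ⟨i, t⟩) <;> rfl

lemma flipPerm_inr {k : ℕ} (S : Finset (Fin k)) (hS : Even S.card) (i : Fin k) (t : Bool) :
    flipPerm S hS (Sum.inr (i, t)) = Sum.inr (i, if i ∈ S then !t else t) := by
  by_cases h : i ∈ S <;>
    simp [flipPerm, Function.Involutive.coe_toPerm, flipV, h] <;> rfl

noncomputable def toS {k : ℕ} (π : Equiv.Perm (CFIVert k)) : Finset (Fin k) :=
  by classical exact Finset.univ.filter (fun i => π (Sum.inr (i, false)) = Sum.inr (i, true))

lemma aut_color_inr {k : ℕ} {π : Equiv.Perm (CFIVert k)} (h : IsCFIAut π) (i : Fin k)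
    (t : Bool) : ∃ t', π (Sum.inr (i, t)) = Sum.inr (i, t') := by
  have hc := h.2 (Sum.inr (i, t))
  rcases hp : π (Sum.inr (i, t)) with b | ⟨j, s⟩
  · rw [hp] at hc; exact absurd hc (by simp [cfiColor])
  · rw [hp] at hc
    simp only [cfiColor, Option.some.injEq] at hc
    exact ⟨s, by rw [hc]⟩

lemma aut_inr {k : ℕ} {π : Equiv.Perm (CFIVert k)} (h : IsCFIAut π) (i : Fin k) (t : Bool) :
    π (Sum.inr (i, t)) = Sum.inr (i, if i ∈ toS π then !t else t) := by
  obtain ⟨u, hu⟩ := aut_color_inr h i false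
  obtain ⟨v, hv⟩ := aut_color_inr h i true
  have huv : u ≠ v := by
    intro he
    have : (Sum.inr (i, false) : CFIVert k) = Sum.inr (i, true) :=
      π.injective (by rw [hu, hv, he])
    simp at this
  have hmem : i ∈ toS π ↔ u = true := by
    simp only [toS, Finset.mem_filter, Finset.mem_univ, true_and, hu]
    constructor
    · intro he; exact (Prod.mk.inj (Sum.inr_injective he)).2
    · intro he; rw [he]
  by_cases hi : i ∈ toS π
  · have hu' : u = true := hmem.mp hi
    have hv' : v = false := by rcases v with _ | _; rfl; exact absurd (hu'.trans rfl) huv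
    rcases t with _ | _ <;> simp [hi, hu, hv, hu', hv'] <;> rfl
  · have hu' : u = false := by
      cases u
      · rfl
      · exact absurd (hmem.mpr rfl) hi
    have hv' : v = true := by
      cases v
      · exact absurd hu' huv
      · rfl
    rcases t with _ | _ <;> simp [hi, hu, hv, hu', hv'] <;> rfl

lemma aut_inl {k : ℕ} {π : Equiv.Perm (CFIVert k)} (h : IsCFIAut π)
    (b : {b : Fin k → Bool // Even (bitWeight b)}) :
    ∃ b', π (Sum.inl b) = Sum.inl b' ∧ b'.1 = flipB (toS π) b.1 := by
  have hc := h.2 (Sum.inl b)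
  rcases hp : π (Sum.inl b) with b' | p
  · refine ⟨b', rfl, ?_⟩
    funext i
    have hadj : cfiAdj (Sum.inl b) (Sum.inr (i, b.1 i)) := rfl
    have := (h.1 (Sum.inl b) (Sum.inr (i, b.1 i))).mpr hadj
    rw [hp, aut_inr h] at this
    have : b'.1 i = (if i ∈ toS π then !(b.1 i) else b.1 i) := this
    rw [this, flipB]
    by_cases hi : i ∈ toS π <;> simp [hi]
  · rw [hp] at hc; exact absurd hc (by simp [cfiColor])

lemma toS_even {k : ℕ} {π : Equiv.Perm (CFIVert k)} (h : IsCFIAut π) :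
    Even (toS π).card := by
  have h0 : bitWeight (fun _ : Fin k => false) = 0 := by simp [bitWeight]
  obtain ⟨b', hb', hflip⟩ := aut_inl h ⟨fun _ => false, by rw [h0]; exact Even.zero⟩
  have he : Even (bitWeight b'.1) := b'.2
  rw [hflip] at he
  rw [even_iff_zmod] at he ⊢
  rw [bw_flip, h0] at he
  simpa using he

lemma aut_eq_flip {k : ℕ} {π : Equiv.Perm (CFIVert k)} (h : IsCFIAut π) :
    π = flipPerm (toS π) (toS_even h) := by
  apply Equiv.ext
  rintro (b | ⟨i, t⟩)
  · obtain ⟨b', hb', hflip⟩ := aut_inl h b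
    rw [hb']
    simp only [flipPerm, Function.Involutive.coe_toPerm, flipV]
    congr 1
    exact Subtype.ext hflip
  · rw [aut_inr h, flipPerm_inr]

noncomputable def autEquivSubsets (k : ℕ) :
    {π : Equiv.Perm (CFIVert k) // IsCFIAut π} ≃ {S : Finset (Fin k) // Even S.card} where
  toFun := fun ⟨π, h⟩ => ⟨toS π, toS_even h⟩
  invFun := fun ⟨S, hS⟩ => ⟨flipPerm S hS, flipPerm_isAut S hS⟩
  left_inv := fun ⟨π, h⟩ => Subtype.ext (aut_eq_flip h).symm
  right_inv := fun ⟨S, hS⟩ => by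
    apply Subtype.ext
    ext i
    simp only [toS, Finset.mem_filter, Finset.mem_univ, true_and, flipPerm_inr]
    by_cases hi : i ∈ S
    · simp [hi] <;> rfl
    · rw [if_neg hi]
      simp only [hi, iff_false]
      intro he
      exact Bool.false_ne_true (Prod.mk.inj (Sum.inr_injective he)).2

def parityInvo {k : ℕ} (i0 : Fin k) (S : Finset (Fin k)) : Finset (Fin k) :=
  if i0 ∈ S then S.erase i0 else insert i0 S

lemma parityInvo_invol {k : ℕ} (i0 : Fin k) (S : Finset (Fin k)) :
    parityInvo i0 (parityInvo i0 S) = S := by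
  by_cases h : i0 ∈ S
  · simp [parityInvo, h, Finset.insert_erase h]
  · simp [parityInvo, h, Finset.erase_insert h]

lemma parityInvo_parity {k : ℕ} (i0 : Fin k) (S : Finset (Fin k)) :
    Even (parityInvo i0 S).card ↔ ¬ Even S.card := by
  by_cases h : i0 ∈ S
  · rw [parityInvo, if_pos h, Finset.card_erase_of_mem h]
    have h1 : 1 ≤ S.card := Finset.card_pos.mpr ⟨i0, h⟩
    rw [Nat.even_sub h1]
    simp
  · rw [parityInvo, if_neg h, Finset.card_insert_of_notMem h, Nat.even_add_one]

lemma card_even_subsets (k : ℕ) :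
    Fintype.card {S : Finset (Fin k) // Even S.card} = 2 ^ (k - 1) := by
  cases k with
  | zero => decide
  | succ n =>
    set N := Fintype.card {S : Finset (Fin (n+1)) // Even S.card} with hN
    have e : {S : Finset (Fin (n+1)) // Even S.card} ≃ {S : Finset (Fin (n+1)) // ¬ Even S.card} :=
      { toFun := fun ⟨S, h⟩ => ⟨parityInvo 0 S, by
          rw [parityInvo_parity]; exact fun hh => hh h⟩
        invFun := fun ⟨S, h⟩ => ⟨parityInvo 0 S, (parityInvo_parity 0 S).mpr h⟩
        left_inv := fun ⟨S, h⟩ => Subtype.ext (parityInvo_invol 0 S)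
        right_inv := fun ⟨S, h⟩ => Subtype.ext (parityInvo_invol 0 S) }
    have h1 : Fintype.card {S : Finset (Fin (n+1)) // ¬ Even S.card} = N := by
      rw [hN, Fintype.card_congr e]
    have h2 : Fintype.card {S : Finset (Fin (n+1)) // ¬ Even S.card} =
        Fintype.card (Finset (Fin (n+1))) - N := Fintype.card_subtype_compl _
    have h3 : Fintype.card (Finset (Fin (n+1))) = 2 ^ (n + 1) := by
      rw [Fintype.card_finset, Fintype.card_fin]
    have h4 : N ≤ Fintype.card (Finset (Fin (n+1))) := hN ▸ Fintype.card_subtype_le _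
    have h5 : (2:ℕ) ^ (n + 1) = 2 ^ n * 2 := pow_succ 2 n
    simp only [Nat.add_sub_cancel]
    omega

/-- Every color-preserving automorphism of χ_k is determined by an even-cardinality
subset S ⊆ [k] (it swaps a_i and b_i exactly for i ∈ S); conversely every
even-cardinality S determines such an automorphism; hence χ_k has exactly 2^(k-1)
such automorphisms. -/
theorem cfi_block_automorphisms (k : ℕ) :
    (∀ π : Equiv.Perm (CFIVert k), IsCFIAut π →
      ∃ S : Finset (Fin k), Even S.card ∧
        ∀ (i : Fin k) (t : Bool),
          π (Sum.inr (i, t)) = Sum.inr (i, if i ∈ S then !t else t)) ∧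
    (∀ S : Finset (Fin k), Even S.card →
      ∃ π : Equiv.Perm (CFIVert k), IsCFIAut π ∧
        ∀ (i : Fin k) (t : Bool),
          π (Sum.inr (i, t)) = Sum.inr (i, if i ∈ S then !t else t)) ∧
    Nat.card {π : Equiv.Perm (CFIVert k) // IsCFIAut π} = 2 ^ (k - 1) := by
  refine ⟨?_, ?_, ?_⟩
  · intro π h
    exact ⟨toS π, toS_even h, fun i t => aut_inr h i t⟩
  · intro S hS
    exact ⟨flipPerm S hS, flipPerm_isAut S hS, flipPerm_inr S hS⟩
  · rw [Nat.card_congr (autEquivSubsets k), Nat.card_eq_fintype_card, card_even_subsets]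
end

section
/- Let c: V^k × V^l → C be tuple colors on a graph G. For any index tuple a ∈ [k]^h with strictly increasing distinct entries (h ≤ k), if a coloring satisfies the k-WL update rule with injective hash, then after h additional iterations the color of a tuple v determines the multiset {{c^t(ψ_a(v, u)) : u ∈ V^h}}, where ψ_a(v,u) replaces the entries of v at positions a by the entries of u. (Lemma: h rounds of k-WL updates recover multisets over h-fold replacements.) -/
/-- `multiReplace a v u` replaces the entries of `v` at the positions `a` by the
entries of `u` (the generalized replacement ψ_a(v, u)). -/
noncomputable def multiReplace {V : Type} {k h : ℕ} (a : Fin h → Fin k)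
    (v : Fin k → V) (u : Fin h → V) : Fin k → V :=
  fun j => if hj : ∃ i, a i = j then u hj.choose else v j

lemma multiReplace_nil {V : Type} {k : ℕ} (a : Fin 0 → Fin k) (v : Fin k → V)
    (u : Fin 0 → V) : multiReplace a v u = v := by
  funext j
  unfold multiReplace
  rw [dif_neg]
  rintro ⟨i, -⟩
  exact i.elim0

lemma multiReplace_cons {V : Type} {k h : ℕ} (a : Fin (h+1) → Fin k)
    (ha : Function.Injective a) (v : Fin k → V) (w : V) (u' : Fin h → V) :
    multiReplace a v (Fin.cons w u') =
      multiReplace (a ∘ Fin.succ) (Function.update v (a 0) w) u' := by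
  funext j
  unfold multiReplace
  by_cases hj : ∃ i, a i = j
  · obtain ⟨i', hi'⟩ := hj
    have hch : (⟨i', hi'⟩ : ∃ i, a i = j).choose = i' :=
      ha ((⟨i', hi'⟩ : ∃ i, a i = j).choose_spec.trans hi'.symm)
    rw [dif_pos ⟨i', hi'⟩, hch]
    rcases Fin.eq_zero_or_eq_succ i' with rfl | ⟨x, rfl⟩
    · rw [Fin.cons_zero, dif_neg, ← hi', Function.update_self]
      rintro ⟨y, hy⟩
      exact Fin.succ_ne_zero y (ha (hy.trans hi'.symm))
    · rw [Fin.cons_succ, dif_pos ⟨x, hi'⟩]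
      have : (⟨x, hi'⟩ : ∃ y, (a ∘ Fin.succ) y = j).choose = x :=
        Fin.succ_injective _
          (ha (((⟨x, hi'⟩ : ∃ y, (a ∘ Fin.succ) y = j).choose_spec).trans hi'.symm))
      rw [this]
  · rw [dif_neg hj, dif_neg, Function.update_of_ne]
    · intro h; exact hj ⟨0, h.symm⟩
    · rintro ⟨y, hy⟩; exact hj ⟨y.succ, hy⟩

lemma univ_pi_cons_bind {V : Type} [Fintype V] [DecidableEq V] {h : ℕ} {γ : Type}
    (F : (Fin (h+1) → V) → γ) :
    (Finset.univ : Finset (Fin (h+1) → V)).val.map F =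
      (Finset.univ : Finset V).val.bind
        (fun w => (Finset.univ : Finset (Fin h → V)).val.map (fun u' => F (Fin.cons w u'))) := by
  have h1 : (Finset.univ : Finset (Fin (h+1) → V)) =
      Finset.map (Fin.consEquiv (fun _ => V)).toEmbedding Finset.univ :=
    (Finset.map_univ_equiv _).symm
  rw [h1, Finset.map_val, Multiset.map_map, ← Finset.univ_product_univ, Finset.product_val]
  rw [show (Finset.univ.val ×ˢ Finset.univ.val : Multiset (V × (Fin h → V))) =
      Finset.univ.val.bind (fun a => Multiset.map (Prod.mk a) Finset.univ.val) from rfl,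
    Multiset.map_bind]
  simp [Fin.consEquiv]

lemma mk_phi {α C γ : Type} [Inhabited γ] (f : α → C) (g : α → γ)
    (H : ∀ v v', f v = f v' → g v = g v') : ∃ φ : C → γ, ∀ v, φ (f v) = g v := by
  classical
  refine ⟨fun x => if hx : ∃ v, f v = x then g hx.choose else default, fun v => ?_⟩
  show (if hx : ∃ w, f w = f v then g hx.choose else default) = g v
  rw [dif_pos ⟨v, rfl⟩]
  exact H _ _ (⟨v, rfl⟩ : ∃ w, f w = f v).choose_spec

lemma kWL_aux {V C : Type} [Fintype V] [DecidableEq V] (k : ℕ)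
    (c : ℕ → (Fin k → V) → C)
    (hupd : ∀ (t : ℕ) (u₁ u₂ : Fin k → V),
      c (t + 1) u₁ = c (t + 1) u₂ ↔
        (c t u₁ = c t u₂ ∧ ∀ i : Fin k,
          (Finset.univ : Finset V).val.map (fun w => c t (Function.update u₁ i w)) =
            (Finset.univ : Finset V).val.map (fun w => c t (Function.update u₂ i w)))) :
    ∀ (h : ℕ) (a : Fin h → Fin k), Function.Injective a → ∀ t : ℕ,
      ∃ φ : C → Multiset C, ∀ v : Fin k → V,
        φ (c (t + h) v) =
          (Finset.univ : Finset (Fin h → V)).val.map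
            (fun u => c t (multiReplace a v u)) := by
  intro h
  induction h with
  | zero =>
    intro a _ t
    refine ⟨fun x => {x}, fun v => ?_⟩
    simp [multiReplace_nil, Finset.univ_unique]
  | succ h ih =>
    intro a ha t
    obtain ⟨φ', hφ'⟩ := ih (a ∘ Fin.succ) (ha.comp (Fin.succ_injective _)) t
    have key : ∀ z : Fin k → V,
        ((Finset.univ : Finset (Fin (h+1) → V)).val.map (fun u => c t (multiReplace a z u))) =
          ((Finset.univ : Finset V).val.map
            (fun w => c (t + h) (Function.update z (a 0) w))).bind φ' := by
      intro z
      rw [univ_pi_cons_bind (fun u => c t (multiReplace a z u)), Multiset.bind_map]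
      refine Multiset.bind_congr (fun w _ => ?_)
      rw [hφ' (Function.update z (a 0) w)]
      exact congrArg (fun f => Multiset.map f Finset.univ.val)
        (funext fun u' => congrArg (c t) (multiReplace_cons a ha z w u'))
    apply mk_phi
    intro v v' hvv'
    have h1 : c (t + h + 1) v = c (t + h + 1) v' := hvv'
    have h2 := ((hupd (t + h) v v').mp h1).2 (a 0)
    rw [key v, key v', h2]

/-- If a coloring of k-tuples satisfies the k-WL update rule with injective hash, then
for any strictly increasing index tuple `a ∈ [k]^h` (0 < h ≤ k), after h additional
iterations the color of a tuple v determines the multiset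
`{{c^t(ψ_a(v, u)) : u ∈ V^h}}` of colors of h-fold replacements. -/
theorem kWL_multiset_recovery {V C : Type} [Fintype V] [DecidableEq V] (k h : ℕ)
    (hh : 0 < h) (hhk : h ≤ k)
    (c : ℕ → (Fin k → V) → C)
    (hupd : ∀ (t : ℕ) (u₁ u₂ : Fin k → V),
      c (t + 1) u₁ = c (t + 1) u₂ ↔
        (c t u₁ = c t u₂ ∧ ∀ i : Fin k,
          (Finset.univ : Finset V).val.map (fun w => c t (Function.update u₁ i w)) =
            (Finset.univ : Finset V).val.map (fun w => c t (Function.update u₂ i w))))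
    (a : Fin h → Fin k) (ha : StrictMono a) :
    ∀ t : ℕ, ∃ φ : C → Multiset C, ∀ v : Fin k → V,
      φ (c (t + h) v) =
        (Finset.univ : Finset (Fin h → V)).val.map
          (fun u => c t (multiReplace a v u)) := by
  exact kWL_aux k c hupd h a ha.injective
end
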